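/- Let q ≥ 1 and N ≥ 1 be integers, let a < b be positive odd integers, let δ1, δ2, δ3 > 0, and let S be a real q×q matrix such that the largest eigenvalue of the symmetric matrix S + Sᵀ is at most 2δ1. For i = 1, …, N let x_i : [0,∞) → ℝ^q be differentiable functions satisfying x_i′(t) = S·x_i(t) − δ1·x_i(t) − δ2·x_i(t)^{a/b} − δ3·x_i(t)^{(2b−a)/b} for all t ≥ 0, where the signed powers are applied componentwise. Then x_i(t) = 0 for every i and every t ≥ (2b/(b−a)) · (1/δ2 + (Nq)^{(b−a)/(2b)}/δ3). -/

import Mathlib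

open Matrix
set_option maxHeartbeats 1000000

/-- Signed power: `spow s r = sign s * |s| ^ r`, the real-valued odd-rational power. -/
noncomputable def spow (s r : ℝ) : ℝ := Real.sign s * |s| ^ r

/-- Componentwise signed power of a vector. -/
noncomputable def vspow {q : ℕ} (v : Fin q → ℝ) (r : ℝ) : Fin q → ℝ := fun k => spow (v k) r

lemma real_rpow_add_le {x y : ℝ} (hx : 0 ≤ x) (hy : 0 ≤ y) {p : ℝ} (hp0 : 0 ≤ p) (hp1 : p ≤ 1) :
    (x + y) ^ p ≤ x ^ p + y ^ p := by
  lift x to NNReal using hx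
  lift y to NNReal using hy
  have := NNReal.rpow_add_le_add_rpow x y hp0 hp1
  exact_mod_cast this

lemma sum_rpow_superadd {ι : Type*} (s : Finset ι) (f : ι → ℝ) (hf : ∀ i ∈ s, 0 ≤ f i)
    {p : ℝ} (hp0 : 0 < p) (hp1 : p ≤ 1) :
    (∑ i ∈ s, f i) ^ p ≤ ∑ i ∈ s, f i ^ p := by
  classical
  induction s using Finset.cons_induction with
  | empty => simp [Real.zero_rpow hp0.ne']
  | cons a s ha ih =>
    rw [Finset.sum_cons, Finset.sum_cons]
    have h1 : (f a + ∑ i ∈ s, f i) ^ p ≤ f a ^ p + (∑ i ∈ s, f i) ^ p :=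
      real_rpow_add_le (hf a (Finset.mem_cons_self a s))
        (Finset.sum_nonneg fun i hi => hf i (Finset.mem_cons_of_mem hi)) hp0.le hp1
    exact h1.trans (by
      gcongr
      exact ih fun i hi => hf i (Finset.mem_cons_of_mem hi))

lemma sum_rpow_lower {q : ℕ} (hq : 0 < q) (f : Fin q → ℝ) (hf : ∀ i, 0 ≤ f i) {p : ℝ}
    (hp : 1 ≤ p) :
    (q : ℝ) ^ ((1:ℝ) - p) * (∑ i, f i) ^ p ≤ ∑ i, f i ^ p := by
  have hq0 : (0:ℝ) < q := by exact_mod_cast hq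
  have h := Real.rpow_arith_mean_le_arith_mean_rpow Finset.univ (fun _ => 1/(q:ℝ)) f
    (fun i _ => by positivity) (by simp [Finset.card_univ]; field_simp) (fun i _ => hf i) hp
  rw [← Finset.mul_sum, ← Finset.mul_sum] at h
  rw [Real.mul_rpow (by positivity) (Finset.sum_nonneg fun i _ => hf i)] at h
  have h2 : ((1:ℝ)/q) ^ p = (q:ℝ) ^ (-p) := by
    rw [one_div, ← Real.rpow_neg_one, ← Real.rpow_mul hq0.le]
    norm_num
  rw [h2] at h
  calc (q:ℝ) ^ ((1:ℝ) - p) * (∑ i, f i) ^ p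
      = (q:ℝ) * ((q:ℝ)^(-p) * (∑ i, f i) ^ p) := by
        rw [← mul_assoc]
        nth_rewrite 2 [← Real.rpow_one (q:ℝ)]
        rw [← Real.rpow_add hq0, sub_eq_add_neg]
    _ ≤ (q:ℝ) * ((1/(q:ℝ)) * ∑ i, f i ^ p) := by
        apply mul_le_mul_of_nonneg_left h hq0.le
    _ = ∑ i, f i ^ p := by field_simp

lemma quad_form_le {q : ℕ} {M : Matrix (Fin q) (Fin q) ℝ} (hM : M.IsHermitian)
    {lam : ℝ} (hlam : ∀ j, hM.eigenvalues j ≤ lam) (v : Fin q → ℝ) :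
    v ⬝ᵥ (M *ᵥ v) ≤ lam * (v ⬝ᵥ v) := by
  classical
  set E := EuclideanSpace ℝ (Fin q) with hE
  let w : E := WithLp.toLp 2 v
  let B := hM.eigenvectorBasis
  have hMt : Mᵀ = M := by
    have := hM.eq
    rwa [conjTranspose_eq_transpose_of_trivial] at this
  have hinner : ∀ u z : E, (inner ℝ u z : ℝ) = (u : Fin q → ℝ) ⬝ᵥ (z : Fin q → ℝ) := by
    intro u z
    rw [EuclideanSpace.inner_eq_star_dotProduct, dotProduct_comm]
    rfl
  have heig : ∀ j : Fin q, M *ᵥ (B j : Fin q → ℝ) = hM.eigenvalues j • (B j : Fin q → ℝ) :=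
    fun j => hM.mulVec_eigenvectorBasis j
  have hsym : ∀ j : Fin q, (inner ℝ (B j) (WithLp.toLp 2 (M *ᵥ v : Fin q → ℝ) : E) : ℝ)
      = hM.eigenvalues j * inner ℝ (B j) w := by
    intro j
    rw [hinner, hinner, WithLp.ofLp_toLp]
    rw [dotProduct_mulVec, ← mulVec_transpose, hMt, heig j, smul_dotProduct]
    rfl
  have hmain : v ⬝ᵥ (M *ᵥ v) = ∑ j, hM.eigenvalues j * (inner ℝ (B j) w : ℝ)^2 := by
    have h0 : v ⬝ᵥ (M *ᵥ v) = (inner ℝ w (WithLp.toLp 2 (M *ᵥ v : Fin q → ℝ) : E) : ℝ) := (hinner w (WithLp.toLp 2 (M *ᵥ v))).symm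
    rw [h0, ← OrthonormalBasis.sum_inner_mul_inner B w (WithLp.toLp 2 (M *ᵥ v : Fin q → ℝ) : E)]
    refine Finset.sum_congr rfl fun j _ => ?_
    rw [hsym j, real_inner_comm w (B j)]
    ring
  have hnorm : v ⬝ᵥ v = ∑ j, (inner ℝ (B j) w : ℝ)^2 := by
    have h0 : v ⬝ᵥ v = (inner ℝ w w : ℝ) := (hinner _ _).symm
    rw [h0, ← OrthonormalBasis.sum_inner_mul_inner B w w]
    refine Finset.sum_congr rfl fun j _ => ?_
    rw [real_inner_comm w (B j)]
    ring
  rw [hmain, hnorm, Finset.mul_sum]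
  exact Finset.sum_le_sum fun j _ => mul_le_mul_of_nonneg_right (hlam j) (sq_nonneg _)

lemma rpow_sq_pos {z : ℝ} (hz : 0 < z) (r : ℝ) : z * z ^ r = ((z^2 : ℝ)) ^ ((1+r)/2) := by
  rw [← Real.rpow_natCast z 2, ← Real.rpow_mul hz.le]
  push_cast
  rw [show (2:ℝ) * ((1+r)/2) = 1 + r by ring, Real.rpow_add hz, Real.rpow_one]

lemma mul_spow (y : ℝ) {r : ℝ} (hr : 0 < r) : y * spow y r = ((y^2 : ℝ)) ^ ((1+r)/2) := by
  rcases lt_trichotomy y 0 with h | h | h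
  · rw [spow, Real.sign_of_neg h, abs_of_neg h]
    have := rpow_sq_pos (neg_pos.mpr h) r
    rw [neg_sq] at this
    rw [← this]; ring
  · simp [h, spow, Real.zero_rpow (by positivity : ((1:ℝ)+r)/2 ≠ 0)]
  · rw [spow, Real.sign_of_pos h, abs_of_pos h, one_mul]
    exact rpow_sq_pos h r

theorem stmt_11 (q N a b : ℕ) (hq : 1 ≤ q) (hN : 1 ≤ N)
    (ha : Odd a) (hb : Odd b) (ha0 : 0 < a) (hab : a < b)
    (δ1 δ2 δ3 : ℝ) (hδ1 : 0 < δ1) (hδ2 : 0 < δ2) (hδ3 : 0 < δ3)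
    (S : Matrix (Fin q) (Fin q) ℝ) (hSH : (S + Sᵀ).IsHermitian)
    (hSbound : (⨆ i, hSH.eigenvalues i) ≤ 2 * δ1)
    (x : Fin N → ℝ → Fin q → ℝ)
    (hdyn : ∀ i, ∀ t : ℝ, 0 ≤ t → HasDerivAt (x i)
      (S *ᵥ x i t - δ1 • x i t - δ2 • vspow (x i t) ((a : ℝ) / b)
        - δ3 • vspow (x i t) ((2 * (b : ℝ) - a) / b)) t) :
    ∀ i, ∀ t : ℝ,
      (2 * (b : ℝ) / ((b : ℝ) - a)) *
          (1 / δ2 + ((N : ℝ) * q) ^ (((b : ℝ) - a) / (2 * b)) / δ3) ≤ t →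
      x i t = 0 := by
  -- basic positivity
  have hb0 : (0:ℝ) < b := by have : 0 < b := ha0.trans hab; exact_mod_cast this
  have ha0' : (0:ℝ) < a := by exact_mod_cast ha0
  have hba : (0:ℝ) < (b:ℝ) - a := by
    have : (a:ℝ) < b := by exact_mod_cast hab
    linarith
  have hq0 : (0:ℝ) < q := by exact_mod_cast hq
  have hN0 : (1:ℝ) ≤ N := by exact_mod_cast hN
  have habR : (a:ℝ) < b := by exact_mod_cast hab
  have hbne : (b:ℝ) ≠ 0 := ne_of_gt hb0
  have hbane : (b:ℝ) - a ≠ 0 := ne_of_gt hba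
  have hδ2ne : δ2 ≠ 0 := ne_of_gt hδ2
  have hδ3ne : δ3 ≠ 0 := ne_of_gt hδ3
  set α : ℝ := ((a:ℝ)+b)/(2*b) with hαdef
  set β : ℝ := (3*(b:ℝ)-a)/(2*b) with hβdef
  have hα0 : 0 < α := by rw [hαdef]; positivity
  have hα1 : α < 1 := by rw [hαdef]; rw [div_lt_one (by positivity)]; linarith
  have hβ1 : 1 ≤ β := by rw [hβdef]; rw [le_div_iff₀ (by positivity)]; linarith
  have hαβ : α + β = 2 := by rw [hαdef, hβdef]; field_simp; ring
  set e : ℝ := ((b:ℝ)-a)/(2*b) with hedef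
  have he0 : 0 < e := by rw [hedef]; positivity
  have h1mα : 1 - α = e := by rw [hαdef, hedef]; field_simp; ring
  have h1mβ : 1 - β = -e := by rw [hβdef, hedef]; field_simp; ring
  intro i t ht
  set y := x i with hy
  set V : ℝ → ℝ := fun s => ∑ k, (y s k)^2 with hVdef
  have hVnonneg : ∀ s, 0 ≤ V s := fun s => Finset.sum_nonneg fun k _ => sq_nonneg _
  set F : ℝ → Fin q → ℝ := fun s =>
    S *ᵥ y s - δ1 • y s - δ2 • vspow (y s) ((a:ℝ)/b) - δ3 • vspow (y s) ((2*(b:ℝ)-a)/b) with hFdef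
  have hco : ∀ s, 0 ≤ s → ∀ k, HasDerivAt (fun u => y u k) (F s k) s := by
    intro s hs k
    exact hasDerivAt_pi.mp (hdyn i s hs) k
  set D : ℝ → ℝ := fun s => ∑ k, 2 * y s k * F s k with hDdef
  have hVderiv : ∀ s, 0 ≤ s → HasDerivAt V (D s) s := by
    intro s hs
    have h : HasDerivAt (fun u => ∑ k, (y u k)^2) (∑ k, (2:ℝ) * y s k ^ 1 * F s k) s :=
      HasDerivAt.fun_sum fun k _ => by simpa [Pi.pow_def] using ((hco s hs k).pow 2)
    simpa [pow_one] using h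
  set g : ℝ → ℝ → ℝ := fun p s => ∑ k, ((y s k)^2 : ℝ) ^ p with hgdef
  -- the quadratic form bound
  have hQle : ∀ s, 2 * (∑ k, y s k * (S *ᵥ y s) k) ≤ 2*δ1*V s := by
    intro s
    have hdot : (∑ k, y s k * (S *ᵥ y s) k) = y s ⬝ᵥ (S *ᵥ y s) := rfl
    have htr : y s ⬝ᵥ (Sᵀ *ᵥ y s) = y s ⬝ᵥ (S *ᵥ y s) := by
      rw [dotProduct_mulVec, vecMul_transpose]
      exact dotProduct_comm _ _
    have h2 : y s ⬝ᵥ ((S+Sᵀ) *ᵥ y s) = 2 * (y s ⬝ᵥ (S *ᵥ y s)) := by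
      rw [add_mulVec, dotProduct_add, htr]; ring
    have hlam : ∀ j, hSH.eigenvalues j ≤ 2 * δ1 := by
      intro j
      refine le_trans ?_ hSbound
      exact le_ciSup (Set.Finite.bddAbove (Set.finite_range _)) j
    have quad := quad_form_le hSH hlam (y s)
    have hvv : y s ⬝ᵥ y s = V s := by
      simp [hVdef, dotProduct, sq]
    rw [hdot]
    rw [hvv] at quad
    linarith [h2 ▸ quad]
  -- exponent identities for spow
  have hr1 : (0:ℝ) < (a:ℝ)/b := by positivity
  have hr2 : (0:ℝ) < (2*(b:ℝ)-a)/b := by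
    apply div_pos _ hb0; linarith
  have hsp1 : ∀ z : ℝ, z * spow z ((a:ℝ)/b) = ((z^2 : ℝ)) ^ α := by
    intro z
    rw [mul_spow _ hr1]
    congr 1
    rw [hαdef]; field_simp; ring
  have hsp2 : ∀ z : ℝ, z * spow z ((2*(b:ℝ)-a)/b) = ((z^2 : ℝ)) ^ β := by
    intro z
    rw [mul_spow _ hr2]
    congr 1
    rw [hβdef]; field_simp; ring
  -- identity for D
  have hDeq : ∀ s, D s = 2*(∑ k, y s k * (S *ᵥ y s) k) - 2*δ1*V s - 2*δ2*g α s - 2*δ3*g β s := by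
    intro s
    have e1 : ∀ k ∈ Finset.univ, 2 * y s k * F s k
        = 2*(y s k * (S *ᵥ y s) k) - 2*δ1*(y s k)^2 - 2*δ2*((y s k)^2)^α - 2*δ3*((y s k)^2)^β := by
      intro k _
      have hFk : F s k = (S *ᵥ y s) k - δ1 * y s k - δ2 * spow (y s k) ((a:ℝ)/b)
          - δ3 * spow (y s k) ((2*(b:ℝ)-a)/b) := by
        simp [hFdef, vspow, Pi.sub_apply, Pi.smul_apply, smul_eq_mul]
      rw [hFk]
      have expand : 2 * y s k * ((S *ᵥ y s) k - δ1 * y s k - δ2 * spow (y s k) ((a:ℝ)/b)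
          - δ3 * spow (y s k) ((2*(b:ℝ)-a)/b))
          = 2*(y s k * (S *ᵥ y s) k) - 2*δ1*(y s k * y s k)
            - 2*δ2*(y s k * spow (y s k) ((a:ℝ)/b))
            - 2*δ3*(y s k * spow (y s k) ((2*(b:ℝ)-a)/b)) := by ring
      rw [expand, hsp1, hsp2]
      ring
    show (∑ k, 2 * y s k * F s k) = _
    rw [Finset.sum_congr rfl e1]
    simp only [Finset.sum_sub_distrib, ← Finset.mul_sum]
    rfl
  -- lower bounds on g
  have hgα : ∀ s, (V s)^α ≤ g α s := by
    intro s
    exact sum_rpow_superadd Finset.univ _ (fun k _ => sq_nonneg _) hα0 hα1.le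
  have hgβ : ∀ s, (q:ℝ)^((1:ℝ)-β) * (V s)^β ≤ g β s := by
    intro s
    exact sum_rpow_lower hq _ (fun k => sq_nonneg _) hβ1
  have hDle : ∀ s, D s ≤ -(2*δ2) * (V s)^α - (2*δ3*(q:ℝ)^((1:ℝ)-β)) * (V s)^β := by
    intro s
    have A := mul_le_mul_of_nonneg_left (hgα s) (by positivity : (0:ℝ) ≤ 2*δ2)
    have B := mul_le_mul_of_nonneg_left (hgβ s) (by positivity : (0:ℝ) ≤ 2*δ3)
    have hq1 := hQle s
    rw [hDeq s]
    linarith [A, B, hq1]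
  -- V is antitone on [0, ∞)
  have hcontV : ContinuousOn V (Set.Ici 0) :=
    fun s hs => (hVderiv s hs).continuousAt.continuousWithinAt
  have hAnti : AntitoneOn V (Set.Ici 0) := by
    apply antitoneOn_of_hasDerivWithinAt_nonpos (convex_Ici 0) hcontV
      (f' := D)
    · intro s hs
      rw [interior_Ici] at hs
      exact (hVderiv s (le_of_lt hs)).hasDerivWithinAt
    · intro s hs
      have h1 : 0 ≤ (V s)^α := Real.rpow_nonneg (hVnonneg s) _
      have h2 : 0 ≤ (V s)^β := Real.rpow_nonneg (hVnonneg s) _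
      have h3 : 0 < (q:ℝ)^((1:ℝ)-β) := Real.rpow_pos_of_pos hq0 _
      have p1 : 0 ≤ 2*δ2*(V s)^α := mul_nonneg (by positivity) h1
      have p2 : 0 ≤ 2*δ3*(q:ℝ)^((1:ℝ)-β)*(V s)^β :=
        mul_nonneg (mul_nonneg (by positivity) h3.le) h2
      linarith [hDle s]
  -- time quantities
  set T1 : ℝ := (2*(b:ℝ)/((b:ℝ)-a)) * (((N:ℝ)*q) ^ (((b:ℝ)-a)/(2*b)) / δ3) with hT1def
  set Ts : ℝ := (2*(b:ℝ)/((b:ℝ)-a)) * (1/δ2 + ((N:ℝ)*q) ^ (((b:ℝ)-a)/(2*b)) / δ3) with hTsdef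
  have hT1nn : 0 ≤ T1 := by rw [hT1def]; positivity
  have hTsT1 : Ts = T1 + 2*(b:ℝ)/((b:ℝ)-a) * (1/δ2) := by rw [hTsdef, hT1def]; ring
  have hT1Ts : T1 ≤ Ts := by rw [hTsT1]; have : 0 < 2*(b:ℝ)/((b:ℝ)-a) * (1/δ2) := by positivity
                             linarith
  have hTs0 : 0 ≤ Ts := le_trans hT1nn hT1Ts
  set k1 : ℝ := 2*δ2*(1-α) with hk1def
  set k2 : ℝ := 2*δ3*(q:ℝ)^((1:ℝ)-β)*(1-α) with hk2def
  have hk1pos : 0 < k1 := by rw [hk1def]; have := hα1; nlinarith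
  have hk2pos : 0 < k2 := by
    rw [hk2def]
    have h3 : 0 < (q:ℝ)^((1:ℝ)-β) := Real.rpow_pos_of_pos hq0 _
    exact mul_pos (mul_pos (by positivity) h3) (by linarith)
  -- key numeric bounds
  have hqe : (0:ℝ) < (q:ℝ)^e := Real.rpow_pos_of_pos hq0 e
  have hpowle : (q:ℝ)^e ≤ ((N:ℝ)*q)^e := by
    apply Real.rpow_le_rpow hq0.le _ he0.le
    nlinarith
  have hk2T1 : 1 ≤ k2 * T1 := by
    have hprod : 1 ≤ (q:ℝ)^(-e) * ((N:ℝ)*q)^e := by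
      rw [Real.rpow_neg hq0.le, inv_mul_eq_div, le_div_iff₀ hqe, one_mul]
      exact hpowle
    have heq : k2 * T1 = 2 * ((q:ℝ)^(-e) * ((N:ℝ)*q)^e) := by
      rw [hk2def, hT1def, h1mβ, h1mα]
      have : (((b:ℝ)-a)/(2*b)) = e := hedef.symm
      rw [← this]
      field_simp
    rw [heq]
    linarith
  have hk1gap : 1 ≤ k1 * (Ts - T1) := by
    have heq : k1 * (Ts - T1) = 2 := by
      rw [hk1def, hTsT1, h1mα, hedef]
      field_simp
      ring
    rw [heq]; norm_num
  -- main claim : V Ts = 0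
  have hVTs : V Ts = 0 := by
    by_contra hne
    have hpos : 0 < V Ts := lt_of_le_of_ne (hVnonneg Ts) (Ne.symm hne)
    have hVpos : ∀ s ∈ Set.Icc (0:ℝ) Ts, 0 < V s := by
      intro s hs
      exact lt_of_lt_of_le hpos (hAnti hs.1 (Set.mem_Ici.mpr hTs0) hs.2)
    -- Z part
    have hZmono : MonotoneOn (fun s => (V s)^(α-1) - k2*s) (Set.Icc 0 Ts) := by
      apply monotoneOn_of_hasDerivWithinAt_nonneg (convex_Icc 0 Ts)
        (f' := fun s => D s * (α-1) * (V s)^(α-1-1) - k2)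
      · intro s hs
        apply ContinuousWithinAt.sub
        · exact (((hVderiv s hs.1).continuousAt).rpow_const
            (Or.inl (hVpos s hs).ne')).continuousWithinAt
        · exact ((continuous_const.mul continuous_id).continuousAt).continuousWithinAt
      · intro s hs
        rw [interior_Icc] at hs
        have hs' : s ∈ Set.Icc (0:ℝ) Ts := ⟨hs.1.le, hs.2.le⟩
        have hlin : HasDerivAt (fun u : ℝ => k2 * u) k2 s := by
          simpa using (hasDerivAt_id s).const_mul k2
        exact (((hVderiv s hs'.1).rpow_const (Or.inl (hVpos s hs').ne')).sub hlin).hasDerivWithinAt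
      · intro s hs
        rw [interior_Icc] at hs
        have hs' : s ∈ Set.Icc (0:ℝ) Ts := ⟨hs.1.le, hs.2.le⟩
        have hVs := hVpos s hs'
        have hcoeff : (α-1) * (V s)^(α-2) ≤ 0 := by
          have h1 : 0 < (V s)^(α-2) := Real.rpow_pos_of_pos hVs _
          nlinarith [hα1]
        have hD3 : D s ≤ -(2*δ3*(q:ℝ)^((1:ℝ)-β)) * (V s)^β := by
          have h1 : 0 ≤ (2*δ2) * (V s)^α := by positivity
          linarith [hDle s]
        have hmul := mul_le_mul_of_nonpos_left hD3 hcoeff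
        have hpowmul : (V s)^(α-2) * (V s)^β = 1 := by
          rw [← Real.rpow_add hVs]
          rw [show α - 2 + β = 0 by linarith]
          exact Real.rpow_zero _
        have hkey : k2 ≤ (α-1) * (V s)^(α-2) * D s := by
          calc k2 = (1-α) * (2*δ3*(q:ℝ)^((1:ℝ)-β)) * ((V s)^(α-2) * (V s)^β) := by
                rw [hpowmul, hk2def]; ring
            _ = (α-1) * (V s)^(α-2) * (-(2*δ3*(q:ℝ)^((1:ℝ)-β)) * (V s)^β) := by ring
            _ ≤ (α-1) * (V s)^(α-2) * D s := hmul
        have he12 : α - 1 - 1 = α - 2 := by ring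
        rw [he12]
        linarith
    have hmem0 : (0:ℝ) ∈ Set.Icc (0:ℝ) Ts := ⟨le_refl 0, hTs0⟩
    have hmemT1 : T1 ∈ Set.Icc (0:ℝ) Ts := ⟨hT1nn, hT1Ts⟩
    have hZ : (V 0)^(α-1) - k2*0 ≤ (V T1)^(α-1) - k2*T1 := hZmono hmem0 hmemT1 hT1nn
    have hZ0 : 0 < (V 0)^(α-1) := Real.rpow_pos_of_pos (hVpos 0 hmem0) _
    have hZT1 : 1 < (V T1)^(α-1) := by
      linarith [hZ, hZ0, hk2T1]
    have hVT1 : V T1 < 1 := by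
      by_contra hge
      push_neg at hge
      have : (V T1)^(α-1) ≤ 1 :=
        Real.rpow_le_one_of_one_le_of_nonpos hge (by linarith)
      linarith
    -- W part
    have hWanti : AntitoneOn (fun s => (V s)^(1-α) + k1*s) (Set.Icc 0 Ts) := by
      apply antitoneOn_of_hasDerivWithinAt_nonpos (convex_Icc 0 Ts)
        (f' := fun s => D s * (1-α) * (V s)^(1-α-1) + k1)
      · intro s hs
        apply ContinuousWithinAt.add
        · exact (((hVderiv s hs.1).continuousAt).rpow_const
            (Or.inl (hVpos s hs).ne')).continuousWithinAt
        · exact ((continuous_const.mul continuous_id).continuousAt).continuousWithinAt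
      · intro s hs
        rw [interior_Icc] at hs
        have hs' : s ∈ Set.Icc (0:ℝ) Ts := ⟨hs.1.le, hs.2.le⟩
        have hlin : HasDerivAt (fun u : ℝ => k1 * u) k1 s := by
          simpa using (hasDerivAt_id s).const_mul k1
        exact (((hVderiv s hs'.1).rpow_const (Or.inl (hVpos s hs').ne')).add hlin).hasDerivWithinAt
      · intro s hs
        rw [interior_Icc] at hs
        have hs' : s ∈ Set.Icc (0:ℝ) Ts := ⟨hs.1.le, hs.2.le⟩
        have hVs := hVpos s hs'
        have hcoeff : 0 ≤ (1-α) * (V s)^(-α) := by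
          have h1 : 0 < (V s)^(-α) := Real.rpow_pos_of_pos hVs _
          nlinarith [hα1]
        have hD2 : D s ≤ -(2*δ2) * (V s)^α := by
          have h1 : 0 ≤ (2*δ3*(q:ℝ)^((1:ℝ)-β)) * (V s)^β := by
            have h3 : 0 < (q:ℝ)^((1:ℝ)-β) := Real.rpow_pos_of_pos hq0 _
            have h4 : 0 ≤ (V s)^β := Real.rpow_nonneg (hVnonneg s) _
            positivity
          linarith [hDle s]
        have hmul := mul_le_mul_of_nonneg_left hD2 hcoeff
        have hpowmul : (V s)^(-α) * (V s)^α = 1 := by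
          rw [← Real.rpow_add hVs]
          rw [show -α + α = 0 by ring]
          exact Real.rpow_zero _
        have heqn : (1-α) * (V s)^(-α) * (-(2*δ2) * (V s)^α) = -k1 := by
          rw [show (1-α)*(V s)^(-α) * (-(2*δ2)*(V s)^α)
              = -(2*δ2*(1-α)) * ((V s)^(-α)*(V s)^α) from by ring, hpowmul, hk1def]
          ring
        have hkey : (1-α) * (V s)^(-α) * D s ≤ -k1 := by
          rw [← heqn]
          exact hmul
        have he12 : (1:ℝ) - α - 1 = -α := by ring
        rw [he12]
        linarith
    have hW : (V Ts)^(1-α) + k1*Ts ≤ (V T1)^(1-α) + k1*T1 :=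
      hWanti hmemT1 (Set.mem_Icc.mpr ⟨hTs0, le_refl Ts⟩) hT1Ts
    have hWT1 : (V T1)^(1-α) < 1 :=
      Real.rpow_lt_one (hVnonneg T1) hVT1 (by linarith)
    have hWTs : 0 < (V Ts)^(1-α) := Real.rpow_pos_of_pos hpos _
    have hgap : 1 ≤ k1*Ts - k1*T1 := by linarith [hk1gap, mul_sub k1 Ts T1]
    linarith [hW, hWT1, hWTs, hgap]
  -- conclude
  have ht0 : (0:ℝ) ≤ t := le_trans hTs0 ht
  have hVt : V t = 0 := by
    have h1 : V t ≤ V Ts := hAnti (Set.mem_Ici.mpr hTs0) (Set.mem_Ici.mpr ht0) ht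
    have h2 := hVnonneg t
    linarith [hVTs ▸ h1]
  funext k
  have hVt' : ∑ k, (y t k)^2 = 0 := hVt
  have hsum : y t k ^ 2 = 0 := (Finset.sum_eq_zero_iff_of_nonneg
    (fun k _ => sq_nonneg (y t k))).mp hVt' k (Finset.mem_univ k)
  have hzero : y t k = 0 := pow_eq_zero_iff two_ne_zero |>.mp hsum
  simpa using hzero
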